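/- Let μ and μ_n (n = 1,2,…) be generalized permutons (λ_n-permutons with λ_n in a compact subinterval of (0,1]) regarded as probability measures on [0,1]². Then the following are equivalent: (i) d_∞(μ_n, μ) → 0; (ii) d_□(μ_n, μ) → 0; (iii) μ_n ⇒ μ (weak convergence). -/

import Mathlib

open MeasureTheory Set Filter
open scoped ENNReal

/-- Joint distribution function of a measure on the plane. -/
noncomputable def jointCDF (μ : Measure (ℝ × ℝ)) (x y : ℝ) : ℝ :=
  (μ {p | p.1 ≤ x ∧ p.2 ≤ y}).toReal

/-- First (x-) marginal distribution function. -/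
noncomputable def margX (μ : Measure (ℝ × ℝ)) (x : ℝ) : ℝ := (μ {p | p.1 ≤ x}).toReal

/-- Second (y-) marginal distribution function. -/
noncomputable def margY (μ : Measure (ℝ × ℝ)) (y : ℝ) : ℝ := (μ {p | p.2 ≤ y}).toReal

/-- A `lam`-permuton: probability measure on `[0,lam] × [0,1]` with uniform first
marginal on `[0,lam]` and second marginal Lipschitz with constant `1/lam`. -/
structure IsGenPermuton (lam : ℝ) (μ : Measure (ℝ × ℝ)) : Prop where
  lam_pos : 0 < lam
  lam_le : lam ≤ 1
  prob : IsProbabilityMeasure μ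
  supp : μ ((Set.Icc 0 lam ×ˢ Set.Icc (0:ℝ) 1)ᶜ) = 0
  unif_margX : ∀ x ∈ Set.Icc (0:ℝ) lam, margX μ x = x / lam
  lip_margY : ∀ a b : ℝ, 0 ≤ a → a ≤ b → b ≤ 1 → margY μ b - margY μ a ≤ (b - a) / lam

/-- The set of `k`-tuples of points in the plane realizing the pattern of `τ`:
there is an ordering `ρ` of the points which is strictly increasing in the first
coordinate, and the point with `i`-th smallest first coordinate has the `τ i`-th
smallest second coordinate. -/
def patternSet {k : ℕ} (τ : Equiv.Perm (Fin k)) : Set (Fin k → ℝ × ℝ) :=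
  {p | ∃ ρ : Equiv.Perm (Fin k), StrictMono (fun i => (p (ρ i)).1) ∧
    StrictMono (fun j => (p (ρ (τ⁻¹ j))).2)}

/-- `t(τ, μ)`: the probability that a `k`-point i.i.d. sample from `μ`
realizes the pattern `τ`. -/
noncomputable def patternDensity {k : ℕ} (τ : Equiv.Perm (Fin k)) (μ : Measure (ℝ × ℝ)) : ℝ :=
  ((Measure.pi fun _ : Fin k => μ) (patternSet τ)).toReal

/-- `d_∞`: sup distance of the joint distribution functions over the unit square. -/
noncomputable def dInf (μ₁ μ₂ : Measure (ℝ × ℝ)) : ℝ :=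
  sSup {d | ∃ x ∈ Set.Icc (0:ℝ) 1, ∃ y ∈ Set.Icc (0:ℝ) 1,
    d = |jointCDF μ₁ x y - jointCDF μ₂ x y|}

/-- `d_□`: rectangular distance over rectangles contained in the unit square. -/
noncomputable def dRect (μ₁ μ₂ : Measure (ℝ × ℝ)) : ℝ :=
  sSup {d | ∃ x₁ x₂ y₁ y₂ : ℝ, 0 ≤ x₁ ∧ x₁ ≤ x₂ ∧ x₂ ≤ 1 ∧ 0 ≤ y₁ ∧ y₁ ≤ y₂ ∧ y₂ ≤ 1 ∧
    d = |(μ₁ (Set.Icc x₁ x₂ ×ˢ Set.Icc y₁ y₂)).toReal -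
         (μ₂ (Set.Icc x₁ x₂ ×ˢ Set.Icc y₁ y₂)).toReal|}

/-- The generalized permuton associated to an ordered selection `ν : Fin m → Fin n`
(0-indexed): density `n²/m` on each square `[h/n,(h+1)/n) × [ν(h)/n,(ν(h)+1)/n)`. -/
noncomputable def selPermuton (n m : ℕ) (ν : Fin m → Fin n) : Measure (ℝ × ℝ) :=
  volume.withDensity (fun p =>
    if ∃ h : Fin m, (h : ℝ)/n ≤ p.1 ∧ p.1 < ((h : ℝ)+1)/n ∧
        (ν h : ℝ)/n ≤ p.2 ∧ p.2 < ((ν h : ℝ)+1)/n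
    then ENNReal.ofReal ((n:ℝ)^2 / m) else 0)

/-- Combinatorial pattern density `t(τ, ν) = Γ(τ,ν) / C(m,k)`. -/
noncomputable def combDensity {n m k : ℕ} (τ : Equiv.Perm (Fin k)) (ν : Fin m → Fin n) : ℝ :=
  (Nat.card {x : Fin k → Fin m // StrictMono x ∧ ∀ i j, ν (x i) < ν (x j) ↔ τ i < τ j} : ℝ)
    / (m.choose k)

/-- Weak convergence of a sequence of measures on the plane. -/
def WeakConv (μs : ℕ → Measure (ℝ × ℝ)) (μ : Measure (ℝ × ℝ)) : Prop :=
  ∀ f : BoundedContinuousFunction (ℝ × ℝ) ℝ,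
    Filter.Tendsto (fun n => ∫ p, f p ∂(μs n)) Filter.atTop (nhds (∫ p, f p ∂μ))

/-- The `q`-quantile of a 1-dim continuous distribution function `F`. -/
noncomputable def quantile (F : ℝ → ℝ) (q : ℝ) : ℝ := sSup {x | F x = q}

/-- The x-grid `0 = x₀ < x₁ < ⋯ < x_k = lam` of the `k`-subdivision of a
`lam`-permuton `μ`, where `x_i` is the `(i/k)`-quantile of the first marginal. -/
noncomputable def gridX (μ : Measure (ℝ × ℝ)) (lam : ℝ) (k : ℕ) (i : ℕ) : ℝ :=
  if i = 0 then 0 else if i = k then lam else quantile (margX μ) ((i : ℝ)/k)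

/-- The y-grid `0 = y₀ < y₁ < ⋯ < y_k = 1` of quantiles of the second marginal. -/
noncomputable def gridY (μ : Measure (ℝ × ℝ)) (k : ℕ) (j : ℕ) : ℝ :=
  if j = 0 then 0 else if j = k then 1 else quantile (margY μ) ((j : ℝ)/k)

/-- The measure `μ_σ` of Definition 3: mass `1/k` distributed uniformly on each
rectangle `R_{i, σ(i)}` of the `k`-quantile grid subdivision of `μ`. -/
noncomputable def subdivMeasure (μ : Measure (ℝ × ℝ)) (lam : ℝ) (k : ℕ)
    (σ : Equiv.Perm (Fin k)) : Measure (ℝ × ℝ) :=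
  ∑ i : Fin k, ((k : ℝ≥0∞))⁻¹ •
    ProbabilityTheory.uniformOn
      (Set.Ico (gridX μ lam k i) (gridX μ lam k (i+1)) ×ˢ
       Set.Ico (gridY μ k (σ i : ℕ)) (gridY μ k ((σ i : ℕ)+1)))

section Aux
open MeasureTheory Set

lemma quadrant_eq (x y : ℝ) : {p : ℝ × ℝ | p.1 ≤ x ∧ p.2 ≤ y} = Set.Iic x ×ˢ Set.Iic y := rfl

lemma measurable_quadrant (x y : ℝ) : MeasurableSet {p : ℝ × ℝ | p.1 ≤ x ∧ p.2 ≤ y} := by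
  rw [quadrant_eq]; exact measurableSet_Iic.prod measurableSet_Iic

lemma measurable_xle (x : ℝ) : MeasurableSet {p : ℝ × ℝ | p.1 ≤ x} :=
  measurable_fst measurableSet_Iic

lemma measurable_yle (y : ℝ) : MeasurableSet {p : ℝ × ℝ | p.2 ≤ y} :=
  measurable_snd measurableSet_Iic

variable {ν : Measure (ℝ × ℝ)}

lemma toReal_measure_diff [IsFiniteMeasure ν] {A B : Set (ℝ × ℝ)} (hA : MeasurableSet A)
    (hAB : A ⊆ B) : (ν (B \ A)).toReal = (ν B).toReal - (ν A).toReal := by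
  rw [measure_diff hAB hA.nullMeasurableSet (measure_ne_top ν A),
    ENNReal.toReal_sub_of_le (measure_mono hAB) (measure_ne_top ν B)]

lemma toReal_measure_mono [IsFiniteMeasure ν] {A B : Set (ℝ × ℝ)} (hAB : A ⊆ B) :
    (ν A).toReal ≤ (ν B).toReal :=
  ENNReal.toReal_mono (measure_ne_top ν B) (measure_mono hAB)

lemma toReal_measure_le_union [IsFiniteMeasure ν] {s t u : Set (ℝ × ℝ)}
    (hsub : s ⊆ t ∪ u) (hu : ν u = 0) : (ν s).toReal ≤ (ν t).toReal := by
  refine ENNReal.toReal_mono (measure_ne_top ν t) ?_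
  calc ν s ≤ ν (t ∪ u) := measure_mono hsub
    _ ≤ ν t + ν u := measure_union_le _ _
    _ = ν t := by rw [hu, add_zero]

lemma measure_eq_null_diff {A B u v : Set (ℝ × ℝ)} (h1 : A ⊆ B ∪ u) (hu : ν u = 0)
    (h2 : B ⊆ A ∪ v) (hv : ν v = 0) : ν A = ν B := by
  apply le_antisymm
  · calc ν A ≤ ν (B ∪ u) := measure_mono h1
      _ ≤ ν B + ν u := measure_union_le _ _
      _ = ν B := by rw [hu, add_zero]
  · calc ν B ≤ ν (A ∪ v) := measure_mono h2
      _ ≤ ν A + ν v := measure_union_le _ _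
      _ = ν A := by rw [hv, add_zero]

lemma jointCDF_nonneg (x y : ℝ) : 0 ≤ jointCDF ν x y := ENNReal.toReal_nonneg

lemma toReal_prob_le_one [IsProbabilityMeasure ν] (s : Set (ℝ × ℝ)) : (ν s).toReal ≤ 1 := by
  have h1 : ν s ≤ 1 := prob_le_one
  simpa using ENNReal.toReal_mono ENNReal.one_ne_top h1

lemma jointCDF_le_one [IsProbabilityMeasure ν] (x y : ℝ) : jointCDF ν x y ≤ 1 :=
  toReal_prob_le_one _

lemma jointCDF_mono [IsFiniteMeasure ν] {x x' y y' : ℝ} (hx : x ≤ x') (hy : y ≤ y') :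
    jointCDF ν x y ≤ jointCDF ν x' y' :=
  toReal_measure_mono (fun p hp => ⟨hp.1.trans hx, hp.2.trans hy⟩)

lemma meas_IocIic [IsFiniteMeasure ν] {x₁ x₂ : ℝ} (hx : x₁ ≤ x₂) (y : ℝ) :
    (ν (Set.Ioc x₁ x₂ ×ˢ Set.Iic y)).toReal = jointCDF ν x₂ y - jointCDF ν x₁ y := by
  have hs : Set.Ioc x₁ x₂ ×ˢ Set.Iic y
      = (Set.Iic x₂ ×ˢ Set.Iic y) \ (Set.Iic x₁ ×ˢ Set.Iic y) := by
    ext p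
    simp only [Set.mem_prod, Set.mem_Ioc, Set.mem_Iic, Set.mem_diff, not_and]
    constructor
    · rintro ⟨⟨h1, h2⟩, h3⟩
      exact ⟨⟨h2, h3⟩, fun hc => absurd h1 (not_lt.2 hc)⟩
    · rintro ⟨⟨h2, h3⟩, hc⟩
      refine ⟨⟨?_, h2⟩, h3⟩
      by_contra hx1
      push_neg at hx1
      exact absurd h3 (hc hx1)
  rw [hs, toReal_measure_diff (measurableSet_Iic.prod measurableSet_Iic)
    (Set.prod_mono_left (Set.Iic_subset_Iic.2 hx))]
  rfl

lemma meas_IocIoc [IsFiniteMeasure ν] {x₁ x₂ y₁ y₂ : ℝ} (hx : x₁ ≤ x₂) (hy : y₁ ≤ y₂) :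
    (ν (Set.Ioc x₁ x₂ ×ˢ Set.Ioc y₁ y₂)).toReal =
      (jointCDF ν x₂ y₂ - jointCDF ν x₁ y₂) - (jointCDF ν x₂ y₁ - jointCDF ν x₁ y₁) := by
  have hs : Set.Ioc x₁ x₂ ×ˢ Set.Ioc y₁ y₂
      = (Set.Ioc x₁ x₂ ×ˢ Set.Iic y₂) \ (Set.Ioc x₁ x₂ ×ˢ Set.Iic y₁) := by
    ext p
    simp only [Set.mem_prod, Set.mem_Ioc, Set.mem_Iic, Set.mem_diff, not_and]
    constructor
    · rintro ⟨h1, h2, h3⟩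
      exact ⟨⟨h1, h3⟩, fun _ => not_le.2 h2⟩
    · rintro ⟨⟨h1, h3⟩, hc⟩
      exact ⟨h1, not_le.1 (hc h1), h3⟩
  rw [hs, toReal_measure_diff (measurableSet_Ioc.prod measurableSet_Iic)
    (Set.prod_mono_right (Set.Iic_subset_Iic.2 hy)),
    meas_IocIic hx, meas_IocIic hx]

end Aux

namespace IsGenPermuton
open MeasureTheory Set

variable {lam : ℝ} {μ : Measure (ℝ × ℝ)}

lemma null_x0 (h : IsGenPermuton lam μ) : μ {p : ℝ × ℝ | p.1 ≤ 0} = 0 := by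
  haveI := h.prob
  have h1 := h.unif_margX 0 ⟨le_refl 0, h.lam_pos.le⟩
  rw [zero_div] at h1
  rcases (ENNReal.toReal_eq_zero_iff _).1 h1 with h2 | h2
  · exact h2
  · exact absurd h2 (measure_ne_top μ _)

lemma null_gt_lam (h : IsGenPermuton lam μ) : μ {p : ℝ × ℝ | lam < p.1} = 0 := by
  refine measure_mono_null ?_ h.supp
  intro p hp hmem
  exact absurd hmem.1.2 (not_le.2 hp)

lemma null_y_neg (h : IsGenPermuton lam μ) : μ {p : ℝ × ℝ | p.2 < 0} = 0 := by
  refine measure_mono_null ?_ h.supp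
  intro p hp hmem
  exact absurd hmem.2.1 (not_le.2 hp)

lemma null_y_gt1 (h : IsGenPermuton lam μ) : μ {p : ℝ × ℝ | 1 < p.2} = 0 := by
  refine measure_mono_null ?_ h.supp
  intro p hp hmem
  exact absurd hmem.2.2 (not_le.2 hp)

lemma margX_lip (h : IsGenPermuton lam μ) {x x' : ℝ} (hx : 0 ≤ x) (hxx : x ≤ x') :
    margX μ x' - margX μ x ≤ (x' - x) / lam := by
  haveI := h.prob
  have hlam := h.lam_pos
  rcases le_or_gt x' lam with h1 | h1
  · rw [h.unif_margX x ⟨hx, hxx.trans h1⟩, h.unif_margX x' ⟨hx.trans hxx, h1⟩, sub_div]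
  · have hub : margX μ x' ≤ margX μ lam := by
      refine toReal_measure_le_union (u := {p : ℝ × ℝ | lam < p.1}) ?_ (h.null_gt_lam)
      intro p hp
      rcases le_or_gt p.1 lam with h2 | h2
      · exact Or.inl h2
      · exact Or.inr h2
    have hml : margX μ lam = 1 := by
      rw [h.unif_margX lam ⟨hlam.le, le_refl _⟩, div_self hlam.ne']
    rcases le_or_gt x lam with h2 | h2
    · have := h.unif_margX x ⟨hx, h2⟩
      rw [this]
      rw [hml] at hub
      have hd : (lam - x) / lam ≤ (x' - x) / lam := by
        gcongr
        all_goals linarith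
      have : 1 - x / lam = (lam - x) / lam := by field_simp
      linarith
    · have hlb : margX μ lam ≤ margX μ x :=
        toReal_measure_mono (fun p hp => le_trans hp h2.le)
      have hd : 0 ≤ (x' - x) / lam := div_nonneg (by linarith) hlam.le
      linarith

lemma margY_lip (h : IsGenPermuton lam μ) {y y' : ℝ} (hy : 0 ≤ y) (hyy : y ≤ y') :
    margY μ y' - margY μ y ≤ (y' - y) / lam := by
  haveI := h.prob
  have hlam := h.lam_pos
  rcases le_or_gt y' 1 with h1 | h1
  · exact h.lip_margY y y' hy hyy h1
  · have hub : margY μ y' ≤ margY μ 1 := by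
      refine toReal_measure_le_union (u := {p : ℝ × ℝ | 1 < p.2}) ?_ (h.null_y_gt1)
      intro p hp
      rcases le_or_gt p.2 1 with h2 | h2
      · exact Or.inl h2
      · exact Or.inr h2
    rcases le_or_gt y 1 with h2 | h2
    · have hlip := h.lip_margY y 1 hy h2 (le_refl _)
      have hd : (1 - y) / lam ≤ (y' - y) / lam := by
        gcongr
        all_goals linarith
      linarith
    · have hlb : margY μ 1 ≤ margY μ y :=
        toReal_measure_mono (fun p hp => le_trans hp h2.le)
      have hd : 0 ≤ (y' - y) / lam := div_nonneg (by linarith) hlam.le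
      linarith

lemma F_sub_le_margX {ν : Measure (ℝ × ℝ)} [IsFiniteMeasure ν] {x x' : ℝ} (hxx : x ≤ x')
    (y : ℝ) : jointCDF ν x' y - jointCDF ν x y ≤ margX ν x' - margX ν x := by
  have hsub1 : {p : ℝ × ℝ | p.1 ≤ x ∧ p.2 ≤ y} ⊆ {p : ℝ × ℝ | p.1 ≤ x' ∧ p.2 ≤ y} :=
    fun p hp => ⟨hp.1.trans hxx, hp.2⟩
  have hsub2 : {p : ℝ × ℝ | p.1 ≤ x} ⊆ {p : ℝ × ℝ | p.1 ≤ x'} := fun p hp => hp.trans hxx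
  rw [jointCDF, jointCDF, margX, margX, ← toReal_measure_diff (measurable_quadrant x y) hsub1,
    ← toReal_measure_diff (measurable_xle x) hsub2]
  refine toReal_measure_mono ?_
  rintro p ⟨hp, hn⟩
  exact ⟨hp.1, fun hc => hn ⟨hc, hp.2⟩⟩

lemma F_sub_le_margY {ν : Measure (ℝ × ℝ)} [IsFiniteMeasure ν] {y y' : ℝ} (hyy : y ≤ y')
    (x : ℝ) : jointCDF ν x y' - jointCDF ν x y ≤ margY ν y' - margY ν y := by
  have hsub1 : {p : ℝ × ℝ | p.1 ≤ x ∧ p.2 ≤ y} ⊆ {p : ℝ × ℝ | p.1 ≤ x ∧ p.2 ≤ y'} :=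
    fun p hp => ⟨hp.1, hp.2.trans hyy⟩
  have hsub2 : {p : ℝ × ℝ | p.2 ≤ y} ⊆ {p : ℝ × ℝ | p.2 ≤ y'} := fun p hp => hp.trans hyy
  rw [jointCDF, jointCDF, margY, margY, ← toReal_measure_diff (measurable_quadrant x y) hsub1,
    ← toReal_measure_diff (measurable_yle y) hsub2]
  refine toReal_measure_mono ?_
  rintro p ⟨hp, hn⟩
  exact ⟨hp.2, fun hc => hn ⟨hp.1, hc⟩⟩

/-- Combined Lipschitz property of the joint CDF of a generalized permuton. -/
lemma F_lip (h : IsGenPermuton lam μ) {x x' y y' : ℝ} (hx : 0 ≤ x) (hxx : x ≤ x')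
    (hy : 0 ≤ y) (hyy : y ≤ y') :
    jointCDF μ x' y' - jointCDF μ x y ≤ (x' - x) / lam + (y' - y) / lam := by
  haveI := h.prob
  have h1 := F_sub_le_margX (ν := μ) hxx y'
  have h2 := F_sub_le_margY (ν := μ) hyy x
  have h3 := h.margX_lip hx hxx
  have h4 := h.margY_lip hy hyy
  linarith

lemma null_vline (h : IsGenPermuton lam μ) (t : ℝ) : μ {p : ℝ × ℝ | p.1 = t} = 0 := by
  haveI := h.prob
  have hlam := h.lam_pos
  rcases le_or_gt t 0 with ht0 | ht0
  · exact measure_mono_null (fun p hp => le_of_eq_of_le hp ht0) h.null_x0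
  rcases lt_or_ge lam t with htl | htl
  · refine measure_mono_null ?_ h.null_gt_lam
    intro p hp
    exact lt_of_lt_of_eq htl hp.symm
  -- 0 < t ≤ lam
  have key : ∀ ε : ℝ, 0 < ε → ε ≤ t → (μ {p : ℝ × ℝ | p.1 = t}).toReal ≤ ε / lam := by
    intro ε hε hεt
    have hsub : {p : ℝ × ℝ | p.1 = t} ⊆ {p : ℝ × ℝ | p.1 ≤ t} \ {p : ℝ × ℝ | p.1 ≤ t - ε} := by
      intro p hp
      refine ⟨le_of_eq hp, fun hc => ?_⟩
      have hp' : p.1 = t := hp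
      have hc' : p.1 ≤ t - ε := hc
      linarith
    calc (μ {p : ℝ × ℝ | p.1 = t}).toReal
        ≤ (μ ({p : ℝ × ℝ | p.1 ≤ t} \ {p : ℝ × ℝ | p.1 ≤ t - ε})).toReal :=
          toReal_measure_mono hsub
      _ = margX μ t - margX μ (t - ε) := by
          refine toReal_measure_diff (measurable_xle _) ?_
          intro p hp
          have hp' : p.1 ≤ t - ε := hp
          show p.1 ≤ t
          linarith
      _ = t / lam - (t - ε) / lam := by
          rw [h.unif_margX t ⟨ht0.le, htl⟩, h.unif_margX (t - ε) ⟨by linarith, by linarith⟩]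
      _ = ε / lam := by ring
  have hnn : 0 ≤ (μ {p : ℝ × ℝ | p.1 = t}).toReal := ENNReal.toReal_nonneg
  have hz : (μ {p : ℝ × ℝ | p.1 = t}).toReal = 0 := by
    by_contra hc
    have hpos : 0 < (μ {p : ℝ × ℝ | p.1 = t}).toReal := lt_of_le_of_ne hnn (Ne.symm hc)
    set c := (μ {p : ℝ × ℝ | p.1 = t}).toReal with hc_def
    have h1 := key (min t (lam * c / 2)) (lt_min ht0 (by positivity)) (min_le_left _ _)
    have h2 : min t (lam * c / 2) / lam ≤ (lam * c / 2) / lam := by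
      gcongr
      exact min_le_right _ _
    have h3 : (lam * c / 2) / lam = c / 2 := by field_simp
    linarith
  rcases (ENNReal.toReal_eq_zero_iff _).1 hz with h2 | h2
  · exact h2
  · exact absurd h2 (measure_ne_top μ _)

lemma null_hline (h : IsGenPermuton lam μ) {t : ℝ} (ht : 0 < t) :
    μ {p : ℝ × ℝ | p.2 = t} = 0 := by
  haveI := h.prob
  have hlam := h.lam_pos
  rcases lt_or_ge 1 t with htl | htl
  · refine measure_mono_null ?_ h.null_y_gt1
    intro p hp
    exact lt_of_lt_of_eq htl hp.symm
  have key : ∀ ε : ℝ, 0 < ε → ε ≤ t → (μ {p : ℝ × ℝ | p.2 = t}).toReal ≤ ε / lam := by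
    intro ε hε hεt
    have hsub : {p : ℝ × ℝ | p.2 = t} ⊆ {p : ℝ × ℝ | p.2 ≤ t} \ {p : ℝ × ℝ | p.2 ≤ t - ε} := by
      intro p hp
      refine ⟨le_of_eq hp, fun hc => ?_⟩
      have hp' : p.2 = t := hp
      have hc' : p.2 ≤ t - ε := hc
      linarith
    calc (μ {p : ℝ × ℝ | p.2 = t}).toReal
        ≤ (μ ({p : ℝ × ℝ | p.2 ≤ t} \ {p : ℝ × ℝ | p.2 ≤ t - ε})).toReal :=
          toReal_measure_mono hsub
      _ = margY μ t - margY μ (t - ε) := by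
          refine toReal_measure_diff (measurable_yle _) ?_
          intro p hp
          have hp' : p.2 ≤ t - ε := hp
          show p.2 ≤ t
          linarith
      _ ≤ (t - (t - ε)) / lam := h.lip_margY (t - ε) t (by linarith) (by linarith) htl
      _ = ε / lam := by ring
  have hnn : 0 ≤ (μ {p : ℝ × ℝ | p.2 = t}).toReal := ENNReal.toReal_nonneg
  have hz : (μ {p : ℝ × ℝ | p.2 = t}).toReal = 0 := by
    by_contra hc
    have hpos : 0 < (μ {p : ℝ × ℝ | p.2 = t}).toReal := lt_of_le_of_ne hnn (Ne.symm hc)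
    set c := (μ {p : ℝ × ℝ | p.2 = t}).toReal with hc_def
    have h1 := key (min t (lam * c / 2)) (lt_min ht (by positivity)) (min_le_left _ _)
    have h2 : min t (lam * c / 2) / lam ≤ (lam * c / 2) / lam := by
      gcongr
      exact min_le_right _ _
    have h3 : (lam * c / 2) / lam = c / 2 := by field_simp
    linarith
  rcases (ENNReal.toReal_eq_zero_iff _).1 hz with h2 | h2
  · exact h2
  · exact absurd h2 (measure_ne_top μ _)

lemma meas_Icc_pos (h : IsGenPermuton lam μ) {x₁ x₂ y₁ y₂ : ℝ} (hx : x₁ ≤ x₂)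
    (hy0 : 0 < y₁) (hy : y₁ ≤ y₂) :
    (μ (Set.Icc x₁ x₂ ×ˢ Set.Icc y₁ y₂)).toReal =
      (jointCDF μ x₂ y₂ - jointCDF μ x₁ y₂) - (jointCDF μ x₂ y₁ - jointCDF μ x₁ y₁) := by
  haveI := h.prob
  have heq : μ (Set.Icc x₁ x₂ ×ˢ Set.Icc y₁ y₂) = μ (Set.Ioc x₁ x₂ ×ˢ Set.Ioc y₁ y₂) := by
    refine measure_eq_null_diff (u := {p : ℝ × ℝ | p.1 = x₁} ∪ {p : ℝ × ℝ | p.2 = y₁})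
      ?_ ?_ (v := ∅) ?_ (measure_empty)
    · rintro p ⟨⟨ha, hb⟩, hc, hd⟩
      rcases eq_or_lt_of_le ha with hea | hlta
      · exact Or.inr (Or.inl hea.symm)
      rcases eq_or_lt_of_le hc with hec | hltc
      · exact Or.inr (Or.inr hec.symm)
      · exact Or.inl ⟨⟨hlta, hb⟩, hltc, hd⟩
    · exact measure_union_null (h.null_vline x₁) (h.null_hline hy0)
    · rintro p ⟨⟨ha, hb⟩, hc, hd⟩
      exact Or.inl ⟨⟨ha.le, hb⟩, hc.le, hd⟩
  rw [heq, meas_IocIoc hx hy]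

lemma meas_Icc_zero (h : IsGenPermuton lam μ) {x₁ x₂ y₂ : ℝ} (hx : x₁ ≤ x₂) :
    (μ (Set.Icc x₁ x₂ ×ˢ Set.Icc 0 y₂)).toReal = jointCDF μ x₂ y₂ - jointCDF μ x₁ y₂ := by
  haveI := h.prob
  have heq : μ (Set.Icc x₁ x₂ ×ˢ Set.Icc 0 y₂) = μ (Set.Ioc x₁ x₂ ×ˢ Set.Iic y₂) := by
    refine measure_eq_null_diff (u := {p : ℝ × ℝ | p.1 = x₁}) ?_ (h.null_vline x₁)
      (v := {p : ℝ × ℝ | p.2 < 0}) ?_ (h.null_y_neg)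
    · rintro p ⟨⟨ha, hb⟩, _, hd⟩
      rcases eq_or_lt_of_le ha with hea | hlta
      · exact Or.inr hea.symm
      · exact Or.inl ⟨⟨hlta, hb⟩, hd⟩
    · rintro p ⟨⟨ha, hb⟩, hd⟩
      rcases lt_or_ge p.2 0 with hc | hc
      · exact Or.inr hc
      · exact Or.inl ⟨⟨ha.le, hb⟩, hc, hd⟩
  rw [heq, meas_IocIic hx]

lemma F_eq_rect (h : IsGenPermuton lam μ) {x y : ℝ} (hx : 0 ≤ x) (hy : 0 ≤ y) :
    jointCDF μ x y = (μ (Set.Icc 0 x ×ˢ Set.Icc 0 y)).toReal := by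
  haveI := h.prob
  have heq : μ {p : ℝ × ℝ | p.1 ≤ x ∧ p.2 ≤ y} = μ (Set.Icc 0 x ×ˢ Set.Icc 0 y) := by
    refine measure_eq_null_diff (u := {p : ℝ × ℝ | p.1 ≤ 0} ∪ {p : ℝ × ℝ | p.2 < 0})
      ?_ ?_ (v := ∅) ?_ (measure_empty)
    · rintro p ⟨ha, hb⟩
      rcases le_or_gt p.1 0 with h1 | h1
      · exact Or.inr (Or.inl h1)
      rcases lt_or_ge p.2 0 with h2 | h2
      · exact Or.inr (Or.inr h2)
      · exact Or.inl ⟨⟨h1.le, ha⟩, h2, hb⟩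
    · exact measure_union_null h.null_x0 h.null_y_neg
    · rintro p ⟨⟨_, ha⟩, _, hb⟩
      exact Or.inl ⟨ha, hb⟩
  rw [jointCDF, heq]

end IsGenPermuton

section Dist
open MeasureTheory Set

variable {μ₁ μ₂ : Measure (ℝ × ℝ)}

lemma dInf_bddAbove [IsProbabilityMeasure μ₁] [IsProbabilityMeasure μ₂] :
    BddAbove {d | ∃ x ∈ Set.Icc (0:ℝ) 1, ∃ y ∈ Set.Icc (0:ℝ) 1,
      d = |jointCDF μ₁ x y - jointCDF μ₂ x y|} := by
  refine ⟨2, ?_⟩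
  rintro d ⟨x, hx, y, hy, rfl⟩
  have h1 := jointCDF_nonneg (ν := μ₁) x y
  have h2 := jointCDF_nonneg (ν := μ₂) x y
  have h3 := jointCDF_le_one (ν := μ₁) x y
  have h4 := jointCDF_le_one (ν := μ₂) x y
  rw [abs_le]
  constructor <;> linarith

lemma abs_F_sub_le_dInf [IsProbabilityMeasure μ₁] [IsProbabilityMeasure μ₂] {x y : ℝ}
    (hx : x ∈ Set.Icc (0:ℝ) 1) (hy : y ∈ Set.Icc (0:ℝ) 1) :
    |jointCDF μ₁ x y - jointCDF μ₂ x y| ≤ dInf μ₁ μ₂ :=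
  le_csSup dInf_bddAbove ⟨x, hx, y, hy, rfl⟩

lemma dInf_nonneg [IsProbabilityMeasure μ₁] [IsProbabilityMeasure μ₂] : 0 ≤ dInf μ₁ μ₂ :=
  le_trans (abs_nonneg _)
    (abs_F_sub_le_dInf (x := 0) (y := 0) ⟨le_refl 0, zero_le_one⟩ ⟨le_refl 0, zero_le_one⟩)

lemma dInf_le {ε : ℝ} (hε : 0 ≤ ε)
    (H : ∀ x ∈ Set.Icc (0:ℝ) 1, ∀ y ∈ Set.Icc (0:ℝ) 1,
      |jointCDF μ₁ x y - jointCDF μ₂ x y| ≤ ε) : dInf μ₁ μ₂ ≤ ε := by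
  refine Real.sSup_le ?_ hε
  rintro d ⟨x, hx, y, hy, rfl⟩
  exact H x hx y hy

lemma dRect_bddAbove [IsProbabilityMeasure μ₁] [IsProbabilityMeasure μ₂] :
    BddAbove {d | ∃ x₁ x₂ y₁ y₂ : ℝ, 0 ≤ x₁ ∧ x₁ ≤ x₂ ∧ x₂ ≤ 1 ∧ 0 ≤ y₁ ∧ y₁ ≤ y₂ ∧ y₂ ≤ 1 ∧
      d = |(μ₁ (Set.Icc x₁ x₂ ×ˢ Set.Icc y₁ y₂)).toReal -
           (μ₂ (Set.Icc x₁ x₂ ×ˢ Set.Icc y₁ y₂)).toReal|} := by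
  refine ⟨2, ?_⟩
  rintro d ⟨x₁, x₂, y₁, y₂, _, _, _, _, _, _, rfl⟩
  have h1 : (0:ℝ) ≤ (μ₁ (Set.Icc x₁ x₂ ×ˢ Set.Icc y₁ y₂)).toReal := ENNReal.toReal_nonneg
  have h2 : (0:ℝ) ≤ (μ₂ (Set.Icc x₁ x₂ ×ˢ Set.Icc y₁ y₂)).toReal := ENNReal.toReal_nonneg
  have h3 := toReal_prob_le_one (ν := μ₁) (Set.Icc x₁ x₂ ×ˢ Set.Icc y₁ y₂)
  have h4 := toReal_prob_le_one (ν := μ₂) (Set.Icc x₁ x₂ ×ˢ Set.Icc y₁ y₂)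
  rw [abs_le]
  constructor <;> linarith

lemma dRect_nonneg [IsProbabilityMeasure μ₁] [IsProbabilityMeasure μ₂] : 0 ≤ dRect μ₁ μ₂ := by
  refine le_trans (abs_nonneg ((μ₁ (Set.Icc 0 0 ×ˢ Set.Icc 0 0)).toReal -
      (μ₂ (Set.Icc 0 0 ×ˢ Set.Icc 0 0)).toReal)) (le_csSup dRect_bddAbove ?_)
  exact ⟨0, 0, 0, 0, le_refl 0, le_refl 0, zero_le_one, le_refl 0, le_refl 0, zero_le_one, rfl⟩

lemma dInf_le_dRect {lam₁ lam₂ : ℝ} (h₁ : IsGenPermuton lam₁ μ₁) (h₂ : IsGenPermuton lam₂ μ₂) :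
    dInf μ₁ μ₂ ≤ dRect μ₁ μ₂ := by
  haveI := h₁.prob; haveI := h₂.prob
  refine Real.sSup_le ?_ dRect_nonneg
  rintro d ⟨x, hx, y, hy, rfl⟩
  rw [h₁.F_eq_rect hx.1 hy.1, h₂.F_eq_rect hx.1 hy.1]
  exact le_csSup dRect_bddAbove
    ⟨0, x, 0, y, le_refl 0, hx.1, hx.2, le_refl 0, hy.1, hy.2, rfl⟩

lemma dRect_le_four_dInf {lam₁ lam₂ : ℝ} (h₁ : IsGenPermuton lam₁ μ₁)
    (h₂ : IsGenPermuton lam₂ μ₂) : dRect μ₁ μ₂ ≤ 4 * dInf μ₁ μ₂ := by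
  haveI := h₁.prob; haveI := h₂.prob
  refine Real.sSup_le ?_ (by linarith [dInf_nonneg (μ₁ := μ₁) (μ₂ := μ₂)])
  rintro d ⟨x₁, x₂, y₁, y₂, h0x, hxx, hx1, h0y, hyy, hy1, rfl⟩
  have m1 : x₁ ∈ Set.Icc (0:ℝ) 1 := ⟨h0x, hxx.trans hx1⟩
  have m2 : x₂ ∈ Set.Icc (0:ℝ) 1 := ⟨h0x.trans hxx, hx1⟩
  have m3 : y₁ ∈ Set.Icc (0:ℝ) 1 := ⟨h0y, hyy.trans hy1⟩
  have m4 : y₂ ∈ Set.Icc (0:ℝ) 1 := ⟨h0y.trans hyy, hy1⟩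
  have b1 := abs_le.1 (abs_F_sub_le_dInf (μ₁ := μ₁) (μ₂ := μ₂) m2 m4)
  have b2 := abs_le.1 (abs_F_sub_le_dInf (μ₁ := μ₁) (μ₂ := μ₂) m1 m4)
  have b3 := abs_le.1 (abs_F_sub_le_dInf (μ₁ := μ₁) (μ₂ := μ₂) m2 m3)
  have b4 := abs_le.1 (abs_F_sub_le_dInf (μ₁ := μ₁) (μ₂ := μ₂) m1 m3)
  rcases h0y.lt_or_eq with hy0 | hy0
  · rw [h₁.meas_Icc_pos hxx hy0 hyy, h₂.meas_Icc_pos hxx hy0 hyy, abs_le]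
    constructor <;> linarith
  · rw [← hy0, h₁.meas_Icc_zero hxx, h₂.meas_Icc_zero hxx, abs_le]
    constructor <;> linarith

end Dist

section Bump
open MeasureTheory Set

noncomputable def clamp01 (t : ℝ) : ℝ := max 0 (min 1 t)

lemma clamp01_nonneg (t : ℝ) : 0 ≤ clamp01 t := le_max_left _ _

lemma clamp01_le_one (t : ℝ) : clamp01 t ≤ 1 :=
  max_le zero_le_one (min_le_left _ _)

lemma clamp01_eq_one {t : ℝ} (h : 1 ≤ t) : clamp01 t = 1 := by
  rw [clamp01, min_eq_left h, max_eq_right zero_le_one]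

lemma clamp01_eq_zero {t : ℝ} (h : t ≤ 0) : clamp01 t = 0 := by
  rw [clamp01, max_eq_left]
  exact min_le_of_right_le h

lemma continuous_clamp01 : Continuous clamp01 :=
  continuous_const.max (continuous_const.min continuous_id)

/-- A continuous "corner bump": equals 1 on the quadrant `p ≤ c`, vanishes outside the
quadrant `p ≤ c + (ε,ε)`. -/
noncomputable def bump (c : ℝ × ℝ) (ε : ℝ) : BoundedContinuousFunction (ℝ × ℝ) ℝ :=
  BoundedContinuousFunction.ofNormedAddCommGroup
    (fun p => clamp01 (1 - (p.1 - c.1) / ε) * clamp01 (1 - (p.2 - c.2) / ε))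
    (by
      apply Continuous.mul
      · exact continuous_clamp01.comp (by fun_prop)
      · exact continuous_clamp01.comp (by fun_prop))
    1
    (by
      intro p
      rw [Real.norm_eq_abs, abs_of_nonneg (mul_nonneg (clamp01_nonneg _) (clamp01_nonneg _))]
      exact mul_le_one₀ (clamp01_le_one _) (clamp01_nonneg _) (clamp01_le_one _))

lemma bump_apply (c : ℝ × ℝ) (ε : ℝ) (p : ℝ × ℝ) :
    bump c ε p = clamp01 (1 - (p.1 - c.1) / ε) * clamp01 (1 - (p.2 - c.2) / ε) := rfl

lemma bump_nonneg (c : ℝ × ℝ) (ε : ℝ) (p : ℝ × ℝ) : 0 ≤ bump c ε p :=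
  mul_nonneg (clamp01_nonneg _) (clamp01_nonneg _)

lemma bump_le_one (c : ℝ × ℝ) (ε : ℝ) (p : ℝ × ℝ) : bump c ε p ≤ 1 :=
  mul_le_one₀ (clamp01_le_one _) (clamp01_nonneg _) (clamp01_le_one _)

lemma bump_eq_one {c : ℝ × ℝ} {ε : ℝ} (hε : 0 < ε) {p : ℝ × ℝ}
    (h1 : p.1 ≤ c.1) (h2 : p.2 ≤ c.2) : bump c ε p = 1 := by
  have a1 : (p.1 - c.1) / ε ≤ 0 :=
    div_nonpos_of_nonpos_of_nonneg (by linarith) hε.le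
  have a2 : (p.2 - c.2) / ε ≤ 0 :=
    div_nonpos_of_nonpos_of_nonneg (by linarith) hε.le
  rw [bump_apply, clamp01_eq_one (by linarith), clamp01_eq_one (by linarith), mul_one]

lemma bump_eq_zero {c : ℝ × ℝ} {ε : ℝ} (hε : 0 < ε) {p : ℝ × ℝ}
    (h : ¬(p.1 ≤ c.1 + ε ∧ p.2 ≤ c.2 + ε)) : bump c ε p = 0 := by
  rw [not_and_or] at h
  rcases h with h | h
  · push_neg at h
    have a1 : 1 ≤ (p.1 - c.1) / ε := (one_le_div hε).2 (by linarith)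
    rw [bump_apply, clamp01_eq_zero (by linarith), zero_mul]
  · push_neg at h
    have a2 : 1 ≤ (p.2 - c.2) / ε := (one_le_div hε).2 (by linarith)
    rw [bump_apply, clamp01_eq_zero (t := 1 - (p.2 - c.2) / ε) (by linarith), mul_zero]

variable {ν : Measure (ℝ × ℝ)} [IsProbabilityMeasure ν]

lemma measure_le_integral_bcf (g : BoundedContinuousFunction (ℝ × ℝ) ℝ)
    (hg0 : ∀ p, 0 ≤ g p) {S : Set (ℝ × ℝ)} (hS : MeasurableSet S)
    (hone : ∀ p ∈ S, (1:ℝ) ≤ g p) : (ν S).toReal ≤ ∫ p, g p ∂ν := by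
  have hint : Integrable g ν := g.integrable ν
  calc (ν S).toReal = ∫ _ in S, (1:ℝ) ∂ν := by rw [setIntegral_const]; simp [Measure.real]
    _ ≤ ∫ p in S, g p ∂ν :=
        setIntegral_mono_on (integrableOn_const (measure_ne_top ν S))
          hint.integrableOn hS hone
    _ ≤ ∫ p, g p ∂ν := setIntegral_le_integral hint (ae_of_all _ hg0)

lemma integral_bcf_le_measure (g : BoundedContinuousFunction (ℝ × ℝ) ℝ)
    (hg1 : ∀ p, g p ≤ 1) {T : Set (ℝ × ℝ)} (hT : MeasurableSet T)
    (hzero : ∀ p ∉ T, g p = 0) : ∫ p, g p ∂ν ≤ (ν T).toReal := by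
  have hint : Integrable g ν := g.integrable ν
  have hsplit := integral_add_compl hT hint
  have hcompl : ∫ p in Tᶜ, g p ∂ν = 0 := by
    rw [setIntegral_congr_fun hT.compl (fun p hp => hzero p hp)]
    simp
  have hTle : ∫ p in T, g p ∂ν ≤ (ν T).toReal := by
    calc ∫ p in T, g p ∂ν ≤ ∫ _ in T, (1:ℝ) ∂ν :=
        setIntegral_mono_on hint.integrableOn
          (integrableOn_const (measure_ne_top ν T)) hT (fun p _ => hg1 p)
      _ = (ν T).toReal := by rw [setIntegral_const]; simp [Measure.real]
  linarith [hsplit, hcompl, hTle]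

end Bump

section WeakToDInf
open MeasureTheory Set Filter

lemma div_le_div_of_base {a δ c : ℝ} (hδ : 0 ≤ δ) (ha : 0 < a) (hc : a ≤ c) :
    δ / c ≤ δ / a := by
  gcongr

lemma pointwise_cdf_conv {a : ℝ} (ha : 0 < a)
    {lam : ℕ → ℝ} {lam₀ : ℝ} (hmem : ∀ n, a ≤ lam n) (hmem₀ : a ≤ lam₀)
    {μs : ℕ → Measure (ℝ × ℝ)} {μ : Measure (ℝ × ℝ)}
    (h : ∀ n, IsGenPermuton (lam n) (μs n)) (h₀ : IsGenPermuton lam₀ μ)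
    (hw : WeakConv μs μ) {x y : ℝ} (hx : x ∈ Set.Icc (0:ℝ) 1) (hy : y ∈ Set.Icc (0:ℝ) 1) :
    Tendsto (fun n => jointCDF (μs n) x y) atTop (nhds (jointCDF μ x y)) := by
  haveI := h₀.prob
  have hl₀ : 0 < lam₀ := h₀.lam_pos
  rw [Metric.tendsto_atTop]
  intro ε hε
  set δ : ℝ := min a (a * ε / 8) with hδdef
  have hδpos : 0 < δ := lt_min ha (by positivity)
  have hδa : δ ≤ a := min_le_left _ _
  have hδε : δ / a ≤ ε / 8 := by
    rw [div_le_iff₀ ha]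
    calc δ ≤ a * ε / 8 := min_le_right _ _
      _ = ε / 8 * a := by ring
  -- upper bump
  set f := bump (x, y) δ with hfdef
  have key1 : ∀ n, jointCDF (μs n) x y ≤ ∫ p, f p ∂(μs n) := by
    intro n
    haveI := (h n).prob
    refine measure_le_integral_bcf f (bump_nonneg _ _) (measurable_quadrant x y) ?_
    intro p hp
    exact (bump_eq_one hδpos hp.1 hp.2).ge
  have key2 : ∫ p, f p ∂μ ≤ jointCDF μ x y + 2 * (δ / a) := by
    have step1 : ∫ p, f p ∂μ ≤ jointCDF μ (x + δ) (y + δ) := by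
      refine integral_bcf_le_measure f (bump_le_one _ _)
        (measurable_quadrant (x + δ) (y + δ)) ?_
      intro p hp
      exact bump_eq_zero hδpos hp
    have step2 := h₀.F_lip hx.1 (by linarith : x ≤ x + δ) hy.1 (by linarith : y ≤ y + δ)
    have step3 : (x + δ - x) / lam₀ ≤ δ / a := by
      rw [show x + δ - x = δ by ring]
      exact div_le_div_of_base hδpos.le ha hmem₀
    have step4 : (y + δ - y) / lam₀ ≤ δ / a := by
      rw [show y + δ - y = δ by ring]
      exact div_le_div_of_base hδpos.le ha hmem₀
    linarith
  -- lower bump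
  set x' : ℝ := max (x - δ) 0 with hx'def
  have hx'0 : 0 ≤ x' := le_max_right _ _
  have hx'le : x' ≤ x := max_le (by linarith) hx.1
  have hx'ge : x - δ ≤ x' := le_max_left _ _
  set g := bump (x', y) δ with hgdef
  have keyA : ∀ n, ∫ p, g p ∂(μs n) ≤ jointCDF (μs n) x y + 2 * (δ / a) := by
    intro n
    haveI := (h n).prob
    have hln : 0 < lam n := lt_of_lt_of_le ha (hmem n)
    have step1 : ∫ p, g p ∂(μs n) ≤ jointCDF (μs n) (x' + δ) (y + δ) := by
      refine integral_bcf_le_measure g (bump_le_one _ _)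
        (measurable_quadrant (x' + δ) (y + δ)) ?_
      intro p hp
      exact bump_eq_zero hδpos hp
    have step2 := (h n).F_lip hx.1 (by linarith : x ≤ x' + δ) hy.1 (by linarith : y ≤ y + δ)
    have step3 : (x' + δ - x) / lam n ≤ δ / a := by
      have e1 : (x' + δ - x) / lam n ≤ δ / lam n := by gcongr <;> linarith
      exact e1.trans (div_le_div_of_base hδpos.le ha (hmem n))
    have step4 : (y + δ - y) / lam n ≤ δ / a := by
      rw [show y + δ - y = δ by ring]
      exact div_le_div_of_base hδpos.le ha (hmem n)
    linarith
  have keyB : jointCDF μ x y ≤ ∫ p, g p ∂μ + δ / a := by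
    have step1 : jointCDF μ x' y ≤ ∫ p, g p ∂μ := by
      refine measure_le_integral_bcf g (bump_nonneg _ _) (measurable_quadrant x' y) ?_
      intro p hp
      exact (bump_eq_one hδpos hp.1 hp.2).ge
    have step2 : jointCDF μ x y - jointCDF μ x' y ≤ δ / a := by
      rcases le_or_gt δ x with hc | hc
      · have hx'eq : x' = x - δ := max_eq_left (by linarith)
        have hyy := h₀.F_lip (x := x') (x' := x) (y := y) (y' := y) hx'0 hx'le hy.1 (le_refl y)
        have e3 : (x - x') / lam₀ ≤ δ / a := by
          rw [hx'eq, show x - (x - δ) = δ by ring]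
          exact div_le_div_of_base hδpos.le ha hmem₀
        have e4 : (y - y) / lam₀ = 0 := by rw [sub_self, zero_div]
        linarith
      · have e1 : jointCDF μ x y ≤ margX μ x := toReal_measure_mono (fun p hp => hp.1)
        have e2 : margX μ x = x / lam₀ := h₀.unif_margX x ⟨hx.1, by linarith⟩
        have e3 : x / lam₀ ≤ δ / a := by
          have i1 : x / lam₀ ≤ δ / lam₀ := by gcongr <;> linarith
          exact i1.trans (div_le_div_of_base hδpos.le ha hmem₀)
        have e4 : 0 ≤ jointCDF μ x' y := jointCDF_nonneg _ _
        linarith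
    linarith
  obtain ⟨N₁, hN₁⟩ := Metric.tendsto_atTop.1 (hw f) (ε / 8) (by positivity)
  obtain ⟨N₂, hN₂⟩ := Metric.tendsto_atTop.1 (hw g) (ε / 8) (by positivity)
  refine ⟨max N₁ N₂, fun n hn => ?_⟩
  have e1 := hN₁ n (le_trans (le_max_left _ _) hn)
  have e2 := hN₂ n (le_trans (le_max_right _ _) hn)
  rw [Real.dist_eq] at e1 e2 ⊢
  have e1' := abs_lt.1 e1
  have e2' := abs_lt.1 e2
  have u1 := key1 n
  have u2 := keyA n
  rw [abs_lt]
  constructor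
  · linarith [keyB, hδε]
  · linarith [key2, hδε]

set_option maxHeartbeats 1000000 in
lemma weakconv_to_dInf {a : ℝ} (ha : 0 < a)
    {lam : ℕ → ℝ} {lam₀ : ℝ} (hmem : ∀ n, a ≤ lam n) (hmem₀ : a ≤ lam₀)
    {μs : ℕ → Measure (ℝ × ℝ)} {μ : Measure (ℝ × ℝ)}
    (h : ∀ n, IsGenPermuton (lam n) (μs n)) (h₀ : IsGenPermuton lam₀ μ)
    (hw : WeakConv μs μ) :
    Tendsto (fun n => dInf (μs n) μ) atTop (nhds 0) := by
  haveI := h₀.prob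
  rw [Metric.tendsto_atTop]
  intro η hη
  -- choose grid size
  obtain ⟨k, hk1, hk2⟩ : ∃ k : ℕ, 1 ≤ k ∧ 2 / ((k : ℝ) * a) ≤ η / 8 := by
    obtain ⟨m, hm⟩ := exists_nat_ge (16 / (a * η))
    refine ⟨m + 1, Nat.le_add_left 1 m, ?_⟩
    have hm1 : (16 : ℝ) / (a * η) ≤ (m + 1 : ℕ) := by
      push_cast
      push_cast at hm
      linarith
    have hmpos : (0:ℝ) < ((m + 1 : ℕ) : ℝ) := by positivity
    rw [div_le_div_iff₀ (by positivity) (by norm_num)]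
    rw [div_le_iff₀ (by positivity)] at hm1
    nlinarith
  have hKpos : (0:ℝ) < (k : ℝ) := by exact_mod_cast hk1
  set K : ℝ := (k : ℝ) with hKdef
  -- eventual closeness at grid points
  have hgrid : ∀ᶠ n in atTop, ∀ ij : Fin (k+1) × Fin (k+1),
      |jointCDF (μs n) ((ij.1 : ℝ) / K) ((ij.2 : ℝ) / K)
        - jointCDF μ ((ij.1 : ℝ) / K) ((ij.2 : ℝ) / K)| ≤ η / 8 := by
    rw [eventually_all]
    intro ij
    have mem1 : (ij.1 : ℝ) / K ∈ Set.Icc (0:ℝ) 1 := by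
      constructor
      · positivity
      · rw [div_le_one hKpos, hKdef]
        exact_mod_cast Nat.lt_succ_iff.1 ij.1.isLt
    have mem2 : (ij.2 : ℝ) / K ∈ Set.Icc (0:ℝ) 1 := by
      constructor
      · positivity
      · rw [div_le_one hKpos, hKdef]
        exact_mod_cast Nat.lt_succ_iff.1 ij.2.isLt
    have hptw := pointwise_cdf_conv ha hmem hmem₀ h h₀ hw mem1 mem2
    obtain ⟨N, hN⟩ := Metric.tendsto_atTop.1 hptw (η / 8) (by positivity)
    rw [eventually_atTop]
    refine ⟨N, fun n hn => ?_⟩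
    have hd := hN n hn
    rw [Real.dist_eq] at hd
    exact hd.le
  rw [eventually_atTop] at hgrid
  obtain ⟨N, hN⟩ := hgrid
  refine ⟨N, fun n hn => ?_⟩
  haveI := (h n).prob
  have hgn : ∀ i j : ℕ, i ≤ k → j ≤ k →
      |jointCDF (μs n) ((i : ℝ) / K) ((j : ℝ) / K)
        - jointCDF μ ((i : ℝ) / K) ((j : ℝ) / K)| ≤ η / 8 :=
    fun i j hi hj => hN n hn (⟨i, Nat.lt_succ_of_le hi⟩, ⟨j, Nat.lt_succ_of_le hj⟩)
  rw [Real.dist_eq, sub_zero, abs_of_nonneg dInf_nonneg]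
  have main : dInf (μs n) μ ≤ η / 2 := by
    refine dInf_le (by linarith) ?_
    intro x hx y hy
    have hx0K : (0:ℝ) ≤ x * K := mul_nonneg hx.1 hKpos.le
    have hy0K : (0:ℝ) ≤ y * K := mul_nonneg hy.1 hKpos.le
    set i0 : ℕ := ⌊x * K⌋₊ with hi0
    set j0 : ℕ := ⌊y * K⌋₊ with hj0
    have hfl_x : (i0 : ℝ) ≤ x * K := Nat.floor_le hx0K
    have hfl_y : (j0 : ℝ) ≤ y * K := Nat.floor_le hy0K
    have hfl_x' : x * K < (i0 : ℝ) + 1 := Nat.lt_floor_add_one (x * K)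
    have hfl_y' : y * K < (j0 : ℝ) + 1 := Nat.lt_floor_add_one (y * K)
    have hi0k : i0 ≤ k := by
      have h2 : x * K ≤ K := by nlinarith [hx.2]
      have h3 := hfl_x.trans h2
      rw [hKdef] at h3
      exact_mod_cast h3
    have hj0k : j0 ≤ k := by
      have h2 : y * K ≤ K := by nlinarith [hy.2]
      have h3 := hfl_y.trans h2
      rw [hKdef] at h3
      exact_mod_cast h3
    set iu : ℕ := min (i0 + 1) k with hiu
    set ju : ℕ := min (j0 + 1) k with hju
    have hiuk : iu ≤ k := min_le_right _ _
    have hjuk : ju ≤ k := min_le_right _ _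
    have hiu_le : (iu : ℝ) ≤ (i0 : ℝ) + 1 := by exact_mod_cast min_le_left (i0+1) k
    have hju_le : (ju : ℝ) ≤ (j0 : ℝ) + 1 := by exact_mod_cast min_le_left (j0+1) k
    have hxl : (i0 : ℝ) / K ≤ x := by
      rw [div_le_iff₀ hKpos]
      exact hfl_x
    have hyl : (j0 : ℝ) / K ≤ y := by
      rw [div_le_iff₀ hKpos]
      exact hfl_y
    have hxl1 : x - (i0 : ℝ) / K ≤ 1 / K := by
      rw [sub_le_iff_le_add, ← add_div, le_div_iff₀ hKpos]
      linarith
    have hyl1 : y - (j0 : ℝ) / K ≤ 1 / K := by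
      rw [sub_le_iff_le_add, ← add_div, le_div_iff₀ hKpos]
      linarith
    have hxu : x ≤ (iu : ℝ) / K := by
      rcases min_cases (i0 + 1) k with ⟨he, _⟩ | ⟨he, _⟩
      · rw [hiu, he, le_div_iff₀ hKpos]
        push_cast
        linarith
      · rw [hiu, he, le_div_iff₀ hKpos]
        nlinarith [hx.2]
    have hyu : y ≤ (ju : ℝ) / K := by
      rcases min_cases (j0 + 1) k with ⟨he, _⟩ | ⟨he, _⟩
      · rw [hju, he, le_div_iff₀ hKpos]
        push_cast
        linarith
      · rw [hju, he, le_div_iff₀ hKpos]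
        nlinarith [hy.2]
    have hxu1 : (iu : ℝ) / K - x ≤ 1 / K := by
      have h4 : (iu : ℝ) / K ≤ (x * K + 1) / K := by gcongr; linarith
      have h5 : (x * K + 1) / K = x + 1 / K := by
        rw [add_div, mul_div_cancel_right₀ _ hKpos.ne']
      linarith
    have hyu1 : (ju : ℝ) / K - y ≤ 1 / K := by
      have h4 : (ju : ℝ) / K ≤ (y * K + 1) / K := by gcongr; linarith
      have h5 : (y * K + 1) / K = y + 1 / K := by
        rw [add_div, mul_div_cancel_right₀ _ hKpos.ne']
      linarith
    have honeK : 1 / K / a ≤ 1 / (K * a) := by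
      rw [div_div]
    have htwoK : 1 / (K * a) + 1 / (K * a) = 2 / (K * a) := by ring
    -- grid bounds
    have gb1' := abs_le.1 (hgn iu ju hiuk hjuk)
    have gb2' := abs_le.1 (hgn i0 j0 hi0k hj0k)
    -- Lipschitz bounds for μ
    have lip1 : jointCDF μ ((iu : ℝ) / K) ((ju : ℝ) / K) - jointCDF μ x y
        ≤ 1 / K / a + 1 / K / a := by
      have hstep := h₀.F_lip hx.1 hxu hy.1 hyu
      have d1 : ((iu : ℝ) / K - x) / lam₀ ≤ 1 / K / a := by
        calc ((iu : ℝ) / K - x) / lam₀ ≤ (1 / K) / lam₀ := by gcongr <;> linarith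
          _ ≤ 1 / K / a := div_le_div_of_base (by positivity) ha hmem₀
      have d2 : (((ju : ℝ) / K) - y) / lam₀ ≤ 1 / K / a := by
        calc (((ju : ℝ) / K) - y) / lam₀ ≤ (1 / K) / lam₀ := by gcongr <;> linarith
          _ ≤ 1 / K / a := div_le_div_of_base (by positivity) ha hmem₀
      linarith
    have lip2 : jointCDF μ x y - jointCDF μ ((i0 : ℝ) / K) ((j0 : ℝ) / K)
        ≤ 1 / K / a + 1 / K / a := by
      have hstep := h₀.F_lip (x := (i0 : ℝ) / K) (x' := x) (y := (j0 : ℝ) / K) (y' := y)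
        (by positivity) hxl (by positivity) hyl
      have d1 : (x - (i0 : ℝ) / K) / lam₀ ≤ 1 / K / a := by
        calc (x - (i0 : ℝ) / K) / lam₀ ≤ (1 / K) / lam₀ := by gcongr <;> linarith
          _ ≤ 1 / K / a := div_le_div_of_base (by positivity) ha hmem₀
      have d2 : (y - (j0 : ℝ) / K) / lam₀ ≤ 1 / K / a := by
        calc (y - (j0 : ℝ) / K) / lam₀ ≤ (1 / K) / lam₀ := by gcongr <;> linarith
          _ ≤ 1 / K / a := div_le_div_of_base (by positivity) ha hmem₀
      linarith
    -- monotonicity for μs n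
    have mon1 : jointCDF (μs n) x y ≤ jointCDF (μs n) ((iu : ℝ) / K) ((ju : ℝ) / K) :=
      jointCDF_mono hxu hyu
    have mon2 : jointCDF (μs n) ((i0 : ℝ) / K) ((j0 : ℝ) / K) ≤ jointCDF (μs n) x y :=
      jointCDF_mono hxl hyl
    rw [abs_le]
    constructor
    · linarith
    · linarith
  linarith

end WeakToDInf

section Cells
open MeasureTheory Set

/-- Partition cell `(i,j)` of the `k × k` grid decomposition of `(0,1] × (-∞,1]`. -/
noncomputable def cell (k : ℕ) (K : ℝ) (ij : Fin k × Fin k) : Set (ℝ × ℝ) :=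
  Set.Ioc ((ij.1 : ℝ)/K) (((ij.1 : ℝ)+1)/K) ×ˢ
    (if (ij.2 : ℕ) = 0 then Set.Iic (1/K)
     else Set.Ioc ((ij.2 : ℝ)/K) (((ij.2 : ℝ)+1)/K))

lemma cell_measurable (k : ℕ) (K : ℝ) (ij : Fin k × Fin k) : MeasurableSet (cell k K ij) := by
  rw [cell]
  rcases eq_or_ne (ij.2 : ℕ) 0 with hj | hj
  · rw [if_pos hj]
    exact measurableSet_Ioc.prod measurableSet_Iic
  · rw [if_neg hj]
    exact measurableSet_Ioc.prod measurableSet_Ioc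

lemma cell_toReal_zero {ν : Measure (ℝ × ℝ)} [IsFiniteMeasure ν] {k : ℕ} {K : ℝ} (hK : 0 < K)
    {ij : Fin k × Fin k} (hj : (ij.2 : ℕ) = 0) :
    (ν (cell k K ij)).toReal =
      jointCDF ν (((ij.1 : ℝ)+1)/K) (1/K) - jointCDF ν ((ij.1 : ℝ)/K) (1/K) := by
  rw [cell, if_pos hj]
  exact meas_IocIic (by gcongr; linarith) _

lemma cell_toReal_pos {ν : Measure (ℝ × ℝ)} [IsFiniteMeasure ν] {k : ℕ} {K : ℝ} (hK : 0 < K)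
    {ij : Fin k × Fin k} (hj : (ij.2 : ℕ) ≠ 0) :
    (ν (cell k K ij)).toReal =
      (jointCDF ν (((ij.1 : ℝ)+1)/K) (((ij.2 : ℝ)+1)/K)
        - jointCDF ν ((ij.1 : ℝ)/K) (((ij.2 : ℝ)+1)/K))
      - (jointCDF ν (((ij.1 : ℝ)+1)/K) ((ij.2 : ℝ)/K)
        - jointCDF ν ((ij.1 : ℝ)/K) ((ij.2 : ℝ)/K)) := by
  rw [cell, if_neg hj]
  exact meas_IocIoc (by gcongr; linarith) (by gcongr; linarith)

lemma nat_div_lt_of_lt {K : ℝ} (hK : 0 < K) {i j : ℕ} {t : ℝ}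
    (h1 : (j : ℝ)/K < t) (h2 : t ≤ ((i : ℝ)+1)/K) : j ≤ i := by
  have h3 : (j : ℝ) < (i : ℝ) + 1 := by
    rw [div_lt_iff₀ hK] at h1
    rw [le_div_iff₀ hK] at h2
    linarith
  exact_mod_cast Nat.lt_add_one_iff.1 (by exact_mod_cast h3)

lemma cell_disjoint {k : ℕ} {K : ℝ} (hK : 0 < K) :
    Set.Pairwise ↑(Finset.univ : Finset (Fin k × Fin k)) (Function.onFun Disjoint (cell k K)) := by
  intro p _ q _ hpq
  rw [Function.onFun]
  rw [Set.disjoint_left]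
  intro z hzp hzq
  rw [cell] at hzp hzq
  apply hpq
  have hx : p.1 = q.1 := by
    have h1 := hzp.1
    have h2 := hzq.1
    have e1 : (p.1 : ℕ) ≤ (q.1 : ℕ) := nat_div_lt_of_lt hK h1.1 h2.2
    have e2 : (q.1 : ℕ) ≤ (p.1 : ℕ) := nat_div_lt_of_lt hK h2.1 h1.2
    exact Fin.ext (le_antisymm e1 e2)
  have hy : p.2 = q.2 := by
    have h1 := hzp.2
    have h2 := hzq.2
    rcases eq_or_ne (p.2 : ℕ) 0 with hp0 | hp0 <;> rcases eq_or_ne (q.2 : ℕ) 0 with hq0 | hq0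
    · exact Fin.ext (by rw [hp0, hq0])
    · exfalso
      rw [if_pos hp0] at h1
      rw [if_neg hq0] at h2
      have e1 : (1:ℝ)/K ≤ (q.2 : ℝ)/K := by
        gcongr
        exact_mod_cast Nat.one_le_iff_ne_zero.2 hq0
      exact absurd (lt_of_le_of_lt (le_trans h1 e1) h2.1) (lt_irrefl _)
    · exfalso
      rw [if_neg hp0] at h1
      rw [if_pos hq0] at h2
      have e1 : (1:ℝ)/K ≤ (p.2 : ℝ)/K := by
        gcongr
        exact_mod_cast Nat.one_le_iff_ne_zero.2 hp0
      exact absurd (lt_of_le_of_lt (le_trans h2 e1) h1.1) (lt_irrefl _)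
    · rw [if_neg hp0] at h1
      rw [if_neg hq0] at h2
      have e1 : (p.2 : ℕ) ≤ (q.2 : ℕ) := nat_div_lt_of_lt hK h1.1 h2.2
      have e2 : (q.2 : ℕ) ≤ (p.2 : ℕ) := nat_div_lt_of_lt hK h2.1 h1.2
      exact Fin.ext (le_antisymm e1 e2)
  exact Prod.ext hx hy

lemma exists_cell_index {K t : ℝ} {k : ℕ} (hK : 0 < K) (hkK : K = (k : ℝ))
    (ht0 : 0 < t) (ht1 : t ≤ 1) :
    ∃ i : ℕ, i < k ∧ (i : ℝ)/K < t ∧ t ≤ ((i : ℝ)+1)/K := by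
  set m := ⌈t * K⌉₊ with hm
  have hm1 : 1 ≤ m := Nat.ceil_pos.2 (mul_pos ht0 hK)
  have hmk : m ≤ k := Nat.ceil_le.2 (by rw [hkK] at *; nlinarith)
  have hcast : ((m - 1 : ℕ) : ℝ) = (m : ℝ) - 1 := by
    push_cast [hm1]
    ring
  refine ⟨m - 1, by omega, ?_, ?_⟩
  · rw [hcast, div_lt_iff₀ hK]
    have := Nat.ceil_lt_add_one (le_of_lt (mul_pos ht0 hK))
    rw [← hm] at this
    linarith
  · rw [hcast, le_div_iff₀ hK]
    have := Nat.le_ceil (t * K)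
    rw [← hm] at this
    linarith

lemma cell_union {k : ℕ} {K : ℝ} (hK : 0 < K) (hkK : K = (k : ℝ)) (hk : 1 ≤ k) :
    ⋃ ij ∈ (Finset.univ : Finset (Fin k × Fin k)), cell k K ij
      = Set.Ioc (0:ℝ) 1 ×ˢ Set.Iic (1:ℝ) := by
  have hK1 : 1 ≤ K := by
    rw [hkK]
    exact_mod_cast hk
  ext z
  simp only [Set.mem_iUnion, Finset.mem_univ, iUnion_true, Set.mem_prod, Set.mem_Ioc,
    Set.mem_Iic]
  constructor
  · rintro ⟨ij, hz⟩
    rw [cell] at hz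
    have hz1 := hz.1
    have hz2 := hz.2
    have hi1 : ((ij.1 : ℕ) : ℝ) + 1 ≤ K := by
      rw [hkK]
      exact_mod_cast ij.1.isLt
    constructor
    · constructor
      · exact lt_of_le_of_lt (by positivity) hz1.1
      · calc z.1 ≤ ((ij.1 : ℝ) + 1)/K := hz1.2
          _ ≤ K / K := by gcongr
          _ = 1 := div_self hK.ne'
    · rcases eq_or_ne (ij.2 : ℕ) 0 with hj | hj
      · rw [if_pos hj] at hz2
        calc z.2 ≤ 1/K := hz2
          _ ≤ 1 := by
            rw [div_le_one hK]
            exact hK1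
      · rw [if_neg hj] at hz2
        have hj1 : ((ij.2 : ℕ) : ℝ) + 1 ≤ K := by
          rw [hkK]
          exact_mod_cast ij.2.isLt
        calc z.2 ≤ ((ij.2 : ℝ) + 1)/K := hz2.2
          _ ≤ K / K := by gcongr
          _ = 1 := div_self hK.ne'
  · rintro ⟨⟨hz1a, hz1b⟩, hz2⟩
    obtain ⟨i, hik, hi1, hi2⟩ := exists_cell_index hK hkK hz1a hz1b
    rcases le_or_gt z.2 (1/K) with hc | hc
    · refine ⟨(⟨i, hik⟩, ⟨0, hk⟩), ?_⟩
      rw [cell, if_pos rfl]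
      exact ⟨⟨hi1, hi2⟩, hc⟩
    · have hz2pos : 0 < z.2 := lt_trans (by positivity) hc
      obtain ⟨j, hjk, hj1, hj2⟩ := exists_cell_index hK hkK hz2pos hz2
      have hjne : j ≠ 0 := by
        intro hj0
        rw [hj0] at hj2
        push_cast at hj2
        rw [zero_add] at hj2
        exact absurd (lt_of_lt_of_le hc hj2) (lt_irrefl _)
      refine ⟨(⟨i, hik⟩, ⟨j, hjk⟩), ?_⟩
      rw [cell, if_neg hjne]
      exact ⟨⟨hi1, hi2⟩, hj1, hj2⟩

end Cells

section DInfToWeak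
open MeasureTheory Set Filter

set_option maxHeartbeats 1000000 in
lemma dInf_to_weakconv {a : ℝ} (ha : 0 < a)
    {lam : ℕ → ℝ} {lam₀ : ℝ}
    {μs : ℕ → Measure (ℝ × ℝ)} {μ : Measure (ℝ × ℝ)}
    (h : ∀ n, IsGenPermuton (lam n) (μs n)) (h₀ : IsGenPermuton lam₀ μ)
    (hd : Tendsto (fun n => dInf (μs n) μ) atTop (nhds 0)) : WeakConv μs μ := by
  haveI := h₀.prob
  intro f
  rw [Metric.tendsto_atTop]
  intro η hη
  set M : ℝ := ‖f‖ + 1 with hMdef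
  have hM : 0 < M := by
    rw [hMdef]
    linarith [norm_nonneg f]
  have hfM : ∀ p, |f p| ≤ M := by
    intro p
    have := f.norm_coe_le_norm p
    rw [Real.norm_eq_abs] at this
    rw [hMdef]
    linarith
  -- uniform continuity on the unit square
  have hcomp : IsCompact (Set.Icc (0:ℝ) 1 ×ˢ Set.Icc (0:ℝ) 1) :=
    isCompact_Icc.prod isCompact_Icc
  have huc : UniformContinuousOn f (Set.Icc (0:ℝ) 1 ×ˢ Set.Icc (0:ℝ) 1) :=
    hcomp.uniformContinuousOn_of_continuous f.continuous.continuousOn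
  obtain ⟨δ, hδpos, hδ⟩ := Metric.uniformContinuousOn_iff.1 huc (η/8) (by positivity)
  -- grid size
  obtain ⟨k, hk1, hkδ⟩ : ∃ k : ℕ, 1 ≤ k ∧ 1/(k:ℝ) < δ := by
    obtain ⟨m, hm⟩ := exists_nat_ge (1/δ)
    refine ⟨m+1, Nat.le_add_left 1 m, ?_⟩
    have hm' : 1 ≤ δ * m := by
      rw [div_le_iff₀ hδpos] at hm
      linarith
    rw [div_lt_iff₀ (by positivity)]
    push_cast
    nlinarith
  set K : ℝ := (k:ℝ) with hKdef
  have hKpos : 0 < K := by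
    rw [hKdef]
    exact_mod_cast hk1
  have h1K : (1:ℝ)/K < δ := by
    rw [hKdef]
    exact hkδ
  -- memberships of grid points
  have hmem1K : (1:ℝ)/K ∈ Set.Icc (0:ℝ) 1 := by
    constructor
    · positivity
    · rw [div_le_one hKpos, hKdef]
      exact_mod_cast hk1
  have hmemi : ∀ i : Fin k, ((i:ℝ))/K ∈ Set.Icc (0:ℝ) 1 := by
    intro i
    constructor
    · positivity
    · rw [div_le_one hKpos, hKdef]
      exact_mod_cast le_of_lt i.isLt
  have hmemi1 : ∀ i : Fin k, ((i:ℝ)+1)/K ∈ Set.Icc (0:ℝ) 1 := by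
    intro i
    constructor
    · positivity
    · rw [div_le_one hKpos, hKdef]
      exact_mod_cast i.isLt
  have hrep_mem : ∀ ij : Fin k × Fin k,
      ((((ij.1:ℝ))+1)/K, (((ij.2:ℝ))+1)/K) ∈ Set.Icc (0:ℝ) 1 ×ˢ Set.Icc (0:ℝ) 1 :=
    fun ij => ⟨hmemi1 ij.1, hmemi1 ij.2⟩
  -- main claim: integral well-approximated by Riemann sum over cells
  have claim : ∀ (ν : Measure (ℝ × ℝ)) (lamν : ℝ), IsGenPermuton lamν ν →
      |∫ p, f p ∂ν - ∑ ij : Fin k × Fin k,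
          f ((((ij.1:ℝ))+1)/K, (((ij.2:ℝ))+1)/K) * (ν (cell k K ij)).toReal| ≤ η/8 := by
    intro ν lamν hν
    haveI := hν.prob
    have hint : Integrable f ν := f.integrable ν
    have hcompl : ν ((Set.Ioc (0:ℝ) 1 ×ˢ Set.Iic (1:ℝ))ᶜ) = 0 := by
      refine measure_mono_null ?_
        (measure_union_null hν.null_x0 (measure_union_null hν.null_gt_lam hν.null_y_gt1))
      intro z hz
      by_cases h1 : z.1 ≤ 0
      · exact Or.inl h1
      by_cases h2 : 1 < z.1
      · exact Or.inr (Or.inl (lt_of_le_of_lt hν.lam_le h2))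
      by_cases h3 : 1 < z.2
      · exact Or.inr (Or.inr h3)
      exfalso
      push_neg at h1 h2 h3
      exact hz ⟨⟨h1, h2⟩, h3⟩
    have hdecomp : ∫ p, f p ∂ν = ∑ ij : Fin k × Fin k, ∫ p in cell k K ij, f p ∂ν := by
      have hU := cell_union hKpos hKdef hk1
      have hadd := integral_add_compl (s := Set.Ioc (0:ℝ) 1 ×ˢ Set.Iic (1:ℝ))
        (measurableSet_Ioc.prod measurableSet_Iic) hint (μ := ν) (f := ⇑f)
      have hz : ∫ p in (Set.Ioc (0:ℝ) 1 ×ˢ Set.Iic (1:ℝ))ᶜ, f p ∂ν = 0 := by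
        rw [Measure.restrict_eq_zero.2 hcompl, integral_zero_measure]
      have h1 : ∫ p in (Set.Ioc (0:ℝ) 1 ×ˢ Set.Iic (1:ℝ)), f p ∂ν = ∫ p, f p ∂ν := by
        linarith
      rw [← h1, ← hU, integral_biUnion_finset Finset.univ
        (fun ij _ => cell_measurable k K ij) (cell_disjoint hKpos)
        (fun ij _ => hint.integrableOn)]
    have hae : ∀ᵐ p ∂ν, ¬ p.2 < 0 := by
      rw [ae_iff]
      simpa [not_not] using hν.null_y_neg
    have hcellapprox : ∀ ij : Fin k × Fin k,
        |∫ p in cell k K ij, f p ∂ν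
          - f ((((ij.1:ℝ))+1)/K, (((ij.2:ℝ))+1)/K) * (ν (cell k K ij)).toReal|
        ≤ (η/8) * (ν (cell k K ij)).toReal := by
      intro ij
      set c : ℝ × ℝ := ((((ij.1:ℝ))+1)/K, (((ij.2:ℝ))+1)/K) with hcdef
      have hbound : ∀ᵐ p ∂ν, p ∈ cell k K ij → |f p - f c| ≤ η/8 := by
        filter_upwards [hae] with p hp2 hpC
        rw [cell] at hpC
        have hp1 := hpC.1
        have hp2C := hpC.2
        have hp2bound : 0 ≤ p.2 ∧ p.2 ≤ (((ij.2:ℝ))+1)/K ∧ (((ij.2:ℝ))+1)/K - p.2 ≤ 1/K := by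
          rcases eq_or_ne (ij.2 : ℕ) 0 with hj | hj
          · rw [if_pos hj] at hp2C
            have hj0 : ((ij.2 : ℕ) : ℝ) = 0 := by rw [hj]; norm_num
            refine ⟨not_lt.1 hp2, ?_, ?_⟩
            · rw [hj0, zero_add]
              exact hp2C
            · rw [hj0, zero_add]
              have : (0:ℝ) ≤ p.2 := not_lt.1 hp2
              linarith
          · rw [if_neg hj] at hp2C
            refine ⟨le_of_lt (lt_of_le_of_lt (by positivity) hp2C.1), hp2C.2, ?_⟩
            have e1 : ((ij.2:ℝ))/K < p.2 := hp2C.1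
            have e2 : (((ij.2:ℝ))+1)/K - ((ij.2:ℝ))/K = 1/K := by
              rw [div_sub_div_same]
              ring_nf
            linarith
        have hpmem : p ∈ Set.Icc (0:ℝ) 1 ×ˢ Set.Icc (0:ℝ) 1 := by
          constructor
          · constructor
            · exact le_of_lt (lt_of_le_of_lt (by positivity) hp1.1)
            · exact le_trans hp1.2 (hmemi1 ij.1).2
          · constructor
            · exact hp2bound.1
            · exact le_trans hp2bound.2.1 (hmemi1 ij.2).2
        have hd1 : |p.1 - c.1| ≤ 1/K := by
          have e1 : ((ij.1:ℝ))/K < p.1 := hp1.1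
          have e2 : p.1 ≤ (((ij.1:ℝ))+1)/K := hp1.2
          have e3 : (((ij.1:ℝ))+1)/K - ((ij.1:ℝ))/K = 1/K := by
            rw [div_sub_div_same]
            ring_nf
          have hc1 : c.1 = (((ij.1:ℝ))+1)/K := rfl
          rw [abs_le, hc1]
          constructor <;> linarith
        have hd2 : |p.2 - c.2| ≤ 1/K := by
          have hc2 : c.2 = (((ij.2:ℝ))+1)/K := rfl
          have e0 := hp2bound.2.1
          have e1 := hp2bound.2.2
          rw [abs_le, hc2]
          constructor <;> linarith
        have hdist : dist p c < δ := by
          rw [Prod.dist_eq]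
          apply max_lt
          · rw [Real.dist_eq]
            exact lt_of_le_of_lt hd1 h1K
          · rw [Real.dist_eq]
            exact lt_of_le_of_lt hd2 h1K
        have := hδ p hpmem c (hrep_mem ij) hdist
        rw [Real.dist_eq] at this
        exact this.le
      have hintC : IntegrableOn (⇑f) (cell k K ij) ν := hint.integrableOn
      have hconst : IntegrableOn (fun _ => f c) (cell k K ij) ν :=
        integrableOn_const (measure_ne_top ν _)
      have e1 : ∫ p in cell k K ij, f p ∂ν - f c * (ν (cell k K ij)).toReal
          = ∫ p in cell k K ij, (f p - f c) ∂ν := by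
        rw [integral_sub hintC hconst, setIntegral_const, smul_eq_mul, mul_comm]; rfl
      rw [e1]
      calc |∫ p in cell k K ij, (f p - f c) ∂ν|
          ≤ ∫ p in cell k K ij, |f p - f c| ∂ν := by
            simpa [Real.norm_eq_abs] using
              norm_integral_le_integral_norm (μ := ν.restrict (cell k K ij))
                (fun p => f p - f c)
        _ ≤ ∫ _ in cell k K ij, (η/8) ∂ν := by
            refine integral_mono_ae ((hintC.sub hconst).abs)
              (integrableOn_const (measure_ne_top ν _)) ?_
            exact (ae_restrict_iff' (cell_measurable k K ij)).2 hbound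
        _ = (η/8) * (ν (cell k K ij)).toReal := by
            rw [setIntegral_const, smul_eq_mul, mul_comm]; rfl
    have hsum_meas : ∑ ij : Fin k × Fin k, (ν (cell k K ij)).toReal ≤ 1 := by
      rw [← ENNReal.toReal_sum (fun ij _ => measure_ne_top ν _)]
      rw [← measure_biUnion_finset (cell_disjoint hKpos) (fun ij _ => cell_measurable k K ij)]
      exact toReal_prob_le_one _
    rw [hdecomp, ← Finset.sum_sub_distrib]
    calc |∑ ij : Fin k × Fin k, (∫ p in cell k K ij, f p ∂ν
            - f ((((ij.1:ℝ))+1)/K, (((ij.2:ℝ))+1)/K) * (ν (cell k K ij)).toReal)|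
        ≤ ∑ ij : Fin k × Fin k, |∫ p in cell k K ij, f p ∂ν
            - f ((((ij.1:ℝ))+1)/K, (((ij.2:ℝ))+1)/K) * (ν (cell k K ij)).toReal| :=
          Finset.abs_sum_le_sum_abs _ _
      _ ≤ ∑ ij : Fin k × Fin k, (η/8) * (ν (cell k K ij)).toReal :=
          Finset.sum_le_sum (fun ij _ => hcellapprox ij)
      _ = (η/8) * ∑ ij : Fin k × Fin k, (ν (cell k K ij)).toReal := by
          rw [Finset.mul_sum]
      _ ≤ (η/8) * 1 := mul_le_mul_of_nonneg_left hsum_meas (by positivity)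
      _ = η/8 := mul_one _
  -- eventual bound via dInf
  set cnt : ℕ := (Finset.univ : Finset (Fin k × Fin k)).card with hcnt
  set B : ℝ := η / (32 * M * ((cnt:ℝ) + 1)) with hBdef
  have hBpos : 0 < B := by
    rw [hBdef]
    positivity
  obtain ⟨N, hN⟩ := Metric.tendsto_atTop.1 hd B hBpos
  refine ⟨N, fun n hn => ?_⟩
  haveI := (h n).prob
  have hdn : dInf (μs n) μ < B := by
    have := hN n hn
    rw [Real.dist_eq, sub_zero] at this
    exact lt_of_le_of_lt (le_abs_self _) this
  have hdnn : 0 ≤ dInf (μs n) μ := dInf_nonneg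
  -- per cell measure comparison
  have hcell : ∀ ij : Fin k × Fin k,
      |(μs n (cell k K ij)).toReal - (μ (cell k K ij)).toReal| ≤ 4 * dInf (μs n) μ := by
    intro ij
    rcases eq_or_ne (ij.2 : ℕ) 0 with hj | hj
    · rw [cell_toReal_zero hKpos hj, cell_toReal_zero hKpos hj]
      have b1 := abs_le.1 (abs_F_sub_le_dInf (μ₁ := μs n) (μ₂ := μ) (hmemi1 ij.1) hmem1K)
      have b2 := abs_le.1 (abs_F_sub_le_dInf (μ₁ := μs n) (μ₂ := μ) (hmemi ij.1) hmem1K)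
      rw [abs_le]
      constructor <;> linarith
    · rw [cell_toReal_pos hKpos hj, cell_toReal_pos hKpos hj]
      have b1 := abs_le.1 (abs_F_sub_le_dInf (μ₁ := μs n) (μ₂ := μ) (hmemi1 ij.1) (hmemi1 ij.2))
      have b2 := abs_le.1 (abs_F_sub_le_dInf (μ₁ := μs n) (μ₂ := μ) (hmemi ij.1) (hmemi1 ij.2))
      have b3 := abs_le.1 (abs_F_sub_le_dInf (μ₁ := μs n) (μ₂ := μ) (hmemi1 ij.1) (hmemi ij.2))
      have b4 := abs_le.1 (abs_F_sub_le_dInf (μ₁ := μs n) (μ₂ := μ) (hmemi ij.1) (hmemi ij.2))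
      rw [abs_le]
      constructor <;> linarith
  -- middle term
  have hmid : |∑ ij : Fin k × Fin k,
        f ((((ij.1:ℝ))+1)/K, (((ij.2:ℝ))+1)/K) * (μs n (cell k K ij)).toReal
      - ∑ ij : Fin k × Fin k,
        f ((((ij.1:ℝ))+1)/K, (((ij.2:ℝ))+1)/K) * (μ (cell k K ij)).toReal|
      ≤ (cnt:ℝ) * (M * (4 * dInf (μs n) μ)) := by
    rw [← Finset.sum_sub_distrib]
    refine le_trans (Finset.abs_sum_le_sum_abs _ _) ?_
    have hstep : ∀ ij : Fin k × Fin k,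
        |f ((((ij.1:ℝ))+1)/K, (((ij.2:ℝ))+1)/K) * (μs n (cell k K ij)).toReal
          - f ((((ij.1:ℝ))+1)/K, (((ij.2:ℝ))+1)/K) * (μ (cell k K ij)).toReal|
        ≤ M * (4 * dInf (μs n) μ) := by
      intro ij
      rw [← mul_sub, abs_mul]
      exact mul_le_mul (hfM _) (hcell ij) (abs_nonneg _) hM.le
    calc ∑ ij : Fin k × Fin k, |f ((((ij.1:ℝ))+1)/K, (((ij.2:ℝ))+1)/K)
            * (μs n (cell k K ij)).toReal
          - f ((((ij.1:ℝ))+1)/K, (((ij.2:ℝ))+1)/K) * (μ (cell k K ij)).toReal|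
        ≤ ∑ _ij : Fin k × Fin k, M * (4 * dInf (μs n) μ) :=
          Finset.sum_le_sum (fun ij _ => hstep ij)
      _ = (cnt:ℝ) * (M * (4 * dInf (μs n) μ)) := by
          rw [Finset.sum_const, nsmul_eq_mul, hcnt]
  have hmid2 : (cnt:ℝ) * (M * (4 * dInf (μs n) μ)) ≤ η/8 := by
    have e1 : (cnt:ℝ) * (M * (4 * dInf (μs n) μ)) ≤ (cnt:ℝ) * (M * (4 * B)) := by
      have : (0:ℝ) ≤ (cnt:ℝ) := Nat.cast_nonneg _
      have h4 : 4 * dInf (μs n) μ ≤ 4 * B := by linarith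
      have h5 : M * (4 * dInf (μs n) μ) ≤ M * (4 * B) := by
        apply mul_le_mul_of_nonneg_left h4 hM.le
      apply mul_le_mul_of_nonneg_left h5 this
    have e2 : (cnt:ℝ) * (M * (4 * B)) = η/8 * ((cnt:ℝ)/((cnt:ℝ)+1)) := by
      rw [hBdef]
      field_simp
      ring
    have e3 : (cnt:ℝ)/((cnt:ℝ)+1) ≤ 1 := by
      rw [div_le_one (by positivity)]
      linarith
    have e4 : η/8 * ((cnt:ℝ)/((cnt:ℝ)+1)) ≤ η/8 * 1 := by
      apply mul_le_mul_of_nonneg_left e3 (by positivity)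
    rw [mul_one] at e4
    exact le_trans e1 (e2.trans_le e4)
  -- final combination
  have hc1 := claim (μs n) (lam n) (h n)
  have hc2 := claim μ lam₀ h₀
  rw [Real.dist_eq]
  have habs1 := abs_le.1 hc1
  have habs2 := abs_le.1 hc2
  have habs3 := abs_le.1 hmid
  have := abs_lt.2 (show -(η) < (∫ p, f p ∂μs n) - ∫ p, f p ∂μ ∧
      (∫ p, f p ∂μs n) - ∫ p, f p ∂μ < η from by constructor <;> linarith)
  exact this

end DInfToWeak

/-- for generalized permutons, convergence in `d_∞`, in `d_□`, and
weak convergence are all equivalent. -/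
theorem stmt8 (a b : ℝ) (ha : 0 < a) (hb : b ≤ 1)
    (lam : ℕ → ℝ) (lam₀ : ℝ) (hmem : ∀ n, lam n ∈ Set.Icc a b) (hmem₀ : lam₀ ∈ Set.Icc a b)
    (μs : ℕ → Measure (ℝ × ℝ)) (μ : Measure (ℝ × ℝ))
    (h : ∀ n, IsGenPermuton (lam n) (μs n)) (h₀ : IsGenPermuton lam₀ μ) :
    (Filter.Tendsto (fun n => dInf (μs n) μ) Filter.atTop (nhds 0) ↔
      Filter.Tendsto (fun n => dRect (μs n) μ) Filter.atTop (nhds 0)) ∧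
    (Filter.Tendsto (fun n => dInf (μs n) μ) Filter.atTop (nhds 0) ↔ WeakConv μs μ) := by
  have hmemA : ∀ n, a ≤ lam n := fun n => (hmem n).1
  have hmemA₀ : a ≤ lam₀ := hmem₀.1
  haveI := h₀.prob
  constructor
  · constructor
    · intro hi
      have hle : ∀ n, dRect (μs n) μ ≤ 4 * dInf (μs n) μ := fun n => by
        haveI := (h n).prob
        exact dRect_le_four_dInf (h n) h₀
      have hge : ∀ n, 0 ≤ dRect (μs n) μ := fun n => by
        haveI := (h n).prob
        exact dRect_nonneg
      have h4 : Filter.Tendsto (fun n => 4 * dInf (μs n) μ) Filter.atTop (nhds 0) := by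
        have := hi.const_mul (4:ℝ)
        simpa using this
      exact tendsto_of_tendsto_of_tendsto_of_le_of_le tendsto_const_nhds h4 hge hle
    · intro hr
      have hle : ∀ n, dInf (μs n) μ ≤ dRect (μs n) μ := fun n => by
        haveI := (h n).prob
        exact dInf_le_dRect (h n) h₀
      have hge : ∀ n, 0 ≤ dInf (μs n) μ := fun n => by
        haveI := (h n).prob
        exact dInf_nonneg
      exact tendsto_of_tendsto_of_tendsto_of_le_of_le tendsto_const_nhds hr hge hle
  · constructor
    · intro hi
      exact dInf_to_weakconv ha h h₀ hi
    · intro hw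
      exact weakconv_to_dInf ha hmemA hmemA₀ h h₀ hw
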